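/- For every real v > 1/2 and every tie-breaking rule, the pair (μ*, ν*) is a mixed Nash equilibrium of the AND–OR game, and its utilities are U_and(μ*, ν*) = 0 and U_or(μ*, ν*) = v − 1/2. -/

import Mathlib

open MeasureTheory Set
open scoped ENNReal

noncomputable section

/-- A bid profile for one player: a bid on each of the two items. -/
abbrev Bid := ℝ × ℝ

/-- The maximum allowed bid `H = max 1 v`. -/
def Hval (v : ℝ) : ℝ := max 1 v

/-- The set of allowed bids `[0,H] × [0,H]`. -/
def box (v : ℝ) : Set Bid := Icc (0:ℝ) (Hval v) ×ˢ Icc (0:ℝ) (Hval v)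

/-- A tie-breaking rule: measurable functions `t₁ t₂ : ℝ → [0,1]`, where `tᵢ x` is the
probability that AND wins item `i` when both players bid `x` on it. -/
structure TieRule where
  t1 : ℝ → ℝ
  t2 : ℝ → ℝ
  meas1 : Measurable t1
  meas2 : Measurable t2
  t1_nonneg : ∀ x, 0 ≤ t1 x
  t1_le_one : ∀ x, t1 x ≤ 1
  t2_nonneg : ∀ x, 0 ≤ t2 x
  t2_le_one : ∀ x, t2 x ≤ 1

/-- Probability that AND wins item 1 with bids `a` (AND) and `b` (OR). -/
def q1 (T : TieRule) (a b : Bid) : ℝ :=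
  if b.1 < a.1 then 1 else if a.1 = b.1 then T.t1 a.1 else 0

/-- Probability that AND wins item 2 with bids `a` (AND) and `b` (OR). -/
def q2 (T : TieRule) (a b : Bid) : ℝ :=
  if b.2 < a.2 then 1 else if a.2 = b.2 then T.t2 a.2 else 0

/-- Expected utility of the AND player at the pure profile `(a,b)`. -/
def uAnd (T : TieRule) (a b : Bid) : ℝ :=
  q1 T a b * q2 T a b - a.1 * q1 T a b - a.2 * q2 T a b

/-- Expected utility of the OR player at the pure profile `(a,b)`. -/
def uOr (v : ℝ) (T : TieRule) (a b : Bid) : ℝ :=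
  v * (1 - q1 T a b * q2 T a b) - b.1 * (1 - q1 T a b) - b.2 * (1 - q2 T a b)

/-- A mixed strategy: a Borel probability measure on `ℝ × ℝ` supported in the box. -/
def IsMixed (v : ℝ) (μ : Measure Bid) : Prop :=
  IsProbabilityMeasure μ ∧ μ (box v) = 1

/-- Expected utility of AND under mixed strategies. -/
def UAnd (T : TieRule) (μ ν : Measure Bid) : ℝ :=
  ∫ p, uAnd T p.1 p.2 ∂(μ.prod ν)

/-- Expected utility of OR under mixed strategies. -/
def UOr (v : ℝ) (T : TieRule) (μ ν : Measure Bid) : ℝ :=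
  ∫ p, uOr v T p.1 p.2 ∂(μ.prod ν)

/-- `(μ,ν)` is a mixed Nash equilibrium of the AND–OR game. -/
def IsNash (v : ℝ) (T : TieRule) (μ ν : Measure Bid) : Prop :=
  IsMixed v μ ∧ IsMixed v ν ∧
  (∀ a ∈ box v, (∫ b, uAnd T a b ∂ν) ≤ UAnd T μ ν) ∧
  (∀ b ∈ box v, (∫ a, uOr v T a b ∂μ) ≤ UOr v T μ ν)

/-- The uniform probability measure on `[0,1] ⊆ ℝ`. -/
def P01 : Measure ℝ := volume.restrict (Icc (0:ℝ) 1)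

/-- The OR equilibrium strategy `ν*`: bid `(x,0)` or `(0,x)` with probability `1/2` each,
where `x ∈ [0,1/2]` has CDF `x/(1-x)`. -/
def nuStar : Measure Bid :=
  (1/2 : ℝ≥0∞) • Measure.map (fun u => (u/(1+u), (0:ℝ))) P01 +
  (1/2 : ℝ≥0∞) • Measure.map (fun u => ((0:ℝ), u/(1+u))) P01

/-- Inverse-CDF map for the AND equilibrium bid distribution. -/
def gAnd (v u : ℝ) : ℝ := if 0 < u then max 0 (v - (v - 1/2)/u) else 0

/-- The AND equilibrium strategy `μ*`: bid `(y,y)` where `y ∈ [0,1/2]` has CDF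
`(v-1/2)/(v-y)`, with an atom of mass `1 - 1/(2v)` at `0`. -/
def muStar (v : ℝ) : Measure Bid := Measure.map (fun u => (gAnd v u, gAnd v u)) P01


/-! ### Auxiliary development -/

section Aux

lemma meas_xmap : Measurable fun u : ℝ => u / (1 + u) :=
  measurable_id.div (measurable_const.add measurable_id)

lemma meas_gAnd (v : ℝ) : Measurable (gAnd v) := by
  unfold gAnd
  exact Measurable.ite (measurableSet_lt measurable_const measurable_id)
    (measurable_const.max (measurable_const.sub (measurable_const.div measurable_id)))
    measurable_const

lemma meas_box (v : ℝ) : MeasurableSet (box v) :=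
  measurableSet_Icc.prod measurableSet_Icc

instance P01_prob : IsProbabilityMeasure P01 := by
  constructor
  unfold P01
  rw [Measure.restrict_apply MeasurableSet.univ, Set.univ_inter, Real.volume_Icc]
  norm_num

lemma P01_apply (S : Set ℝ) : P01 S = volume (S ∩ Icc (0:ℝ) 1) :=
  Measure.restrict_apply' measurableSet_Icc

lemma ae_mem01 : ∀ᵐ u ∂P01, u ∈ Icc (0:ℝ) 1 := by
  unfold P01; exact ae_restrict_mem measurableSet_Icc

lemma P01_toReal_le_one (S : Set ℝ) : (P01 S).toReal ≤ 1 := by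
  have h := prob_le_one (μ := P01) (s := S)
  calc (P01 S).toReal ≤ (1 : ℝ≥0∞).toReal := ENNReal.toReal_mono ENNReal.one_ne_top h
    _ = 1 := by simp

/-- CDF-type quantity for the OR bid distribution. -/
def Fv (s : ℝ) : ℝ := (P01 {u : ℝ | u / (1 + u) < s}).toReal

lemma Fv_nonneg (s : ℝ) : 0 ≤ Fv s := ENNReal.toReal_nonneg

lemma Fv_le_one (s : ℝ) : Fv s ≤ 1 := P01_toReal_le_one _

lemma Fv_eq {s : ℝ} (h0 : 0 ≤ s) (h1 : s ≤ 1/2) : Fv s = s / (1 - s) := by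
  have hden : 0 < 1 - s := by linarith
  have hset : {u : ℝ | u / (1 + u) < s} ∩ Icc (0:ℝ) 1 = Ico 0 (s / (1 - s)) := by
    ext u
    simp only [mem_inter_iff, mem_setOf_eq, mem_Icc, mem_Ico]
    constructor
    · rintro ⟨hlt, hu0, hu1⟩
      refine ⟨hu0, ?_⟩
      have hpos : (0:ℝ) < 1 + u := by linarith
      rw [div_lt_iff₀ hpos] at hlt
      rw [lt_div_iff₀ hden]
      nlinarith
    · rintro ⟨hu0, hlt⟩
      have hub : s / (1 - s) ≤ 1 := by rw [div_le_one hden]; linarith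
      have hu1 : u ≤ 1 := le_trans hlt.le hub
      have hpos : (0:ℝ) < 1 + u := by linarith
      refine ⟨?_, hu0, hu1⟩
      rw [div_lt_iff₀ hpos]
      rw [lt_div_iff₀ hden] at hlt
      nlinarith
  rw [Fv, P01_apply, hset, Real.volume_Ico, sub_zero,
    ENNReal.toReal_ofReal (by positivity)]

lemma Fv_key {s c : ℝ} (hs : 0 ≤ s) (hc : c ≤ 1) : Fv s * (c - s) ≤ s := by
  have h1 : Fv s * (c - s) ≤ Fv s * (1 - s) :=
    mul_le_mul_of_nonneg_left (by linarith) (Fv_nonneg s)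
  refine h1.trans ?_
  rcases le_or_gt s (1/2) with h | h
  · rw [Fv_eq hs h, div_mul_cancel₀]
    linarith
  · rcases le_or_gt (1 - s) 0 with h2 | h2
    · nlinarith [Fv_nonneg s]
    · nlinarith [Fv_le_one s, Fv_nonneg s]

/-- CDF-type quantity for the AND bid distribution. -/
def Gv (v s : ℝ) : ℝ := (P01 {u : ℝ | gAnd v u ≤ s}).toReal

lemma Gv_nonneg (v s : ℝ) : 0 ≤ Gv v s := ENNReal.toReal_nonneg

lemma Gv_le_one (v s : ℝ) : Gv v s ≤ 1 := P01_toReal_le_one _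

lemma gAnd_nonneg (v u : ℝ) : 0 ≤ gAnd v u := by
  rw [gAnd]; split_ifs
  · exact le_max_left _ _
  · exact le_rfl

lemma gAnd_le_half {v u : ℝ} (hv : 1/2 < v) (hu : u ≤ 1) : gAnd v u ≤ 1/2 := by
  rw [gAnd]; split_ifs with h
  · refine max_le (by norm_num) ?_
    have hd : v - 1/2 ≤ (v - 1/2)/u := by
      rw [le_div_iff₀ h]; nlinarith
    linarith
  · norm_num

lemma Gv_eq {v s : ℝ} (hv : 1/2 < v) (h0 : 0 ≤ s) (h1 : s ≤ 1/2) :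
    Gv v s = (v - 1/2) / (v - s) := by
  have hvs : 0 < v - s := by linarith
  have hnum : 0 < v - 1/2 := by linarith
  set w := (v - 1/2) / (v - s) with hw
  have hw0 : 0 < w := div_pos hnum hvs
  have hw1 : w ≤ 1 := by rw [hw, div_le_one hvs]; linarith
  have hset : {u : ℝ | gAnd v u ≤ s} ∩ Icc (0:ℝ) 1 = Icc 0 w := by
    ext u
    simp only [mem_inter_iff, mem_setOf_eq, mem_Icc]
    constructor
    · rintro ⟨hg, hu0, hu1⟩
      refine ⟨hu0, ?_⟩
      rw [gAnd] at hg
      split_ifs at hg with hu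
      · have hX : v - (v - 1/2)/u ≤ s := le_trans (le_max_right _ _) hg
        have h2 : v - s ≤ (v - 1/2)/u := by linarith
        rw [le_div_iff₀ hu] at h2
        rw [hw, le_div_iff₀ hvs]
        nlinarith
      · exact le_trans (not_lt.1 hu) hw0.le
    · rintro ⟨hu0, huw⟩
      have hu1 : u ≤ 1 := huw.trans hw1
      refine ⟨?_, hu0, hu1⟩
      rw [gAnd]
      split_ifs with hu
      · refine max_le h0 ?_
        have h3 : u * (v - s) ≤ v - 1/2 := by
          rw [hw] at huw
          rw [le_div_iff₀ hvs] at huw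
          linarith
        have h4 : v - s ≤ (v - 1/2)/u := by
          rw [le_div_iff₀ hu]; nlinarith
        linarith
      · simpa using h0
  rw [Gv, P01_apply, hset, Real.volume_Icc, sub_zero, ENNReal.toReal_ofReal hw0.le]

lemma Gv_key {v s : ℝ} (hv : 1/2 < v) (hs : 0 ≤ s) : (v - s) * Gv v s ≤ v - 1/2 := by
  rcases le_or_gt s (1/2) with h | h
  · rw [Gv_eq hv hs h]
    rw [mul_comm, div_mul_cancel₀]
    linarith
  · rcases le_or_gt (v - s) 0 with h2 | h2
    · nlinarith [Gv_nonneg v s]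
    · nlinarith [Gv_le_one v s, Gv_nonneg v s]

lemma tie_x (s : ℝ) : P01 {w : ℝ | s = w / (1 + w)} = 0 := by
  rw [P01_apply]
  apply Set.Subsingleton.measure_zero
  intro u hu u' hu'
  obtain ⟨he, hu0, hu1⟩ := hu
  obtain ⟨he', hu0', hu1'⟩ := hu'
  have h1 : (0:ℝ) < 1 + u := by linarith
  have h1' : (0:ℝ) < 1 + u' := by linarith
  have heq : u / (1 + u) = u' / (1 + u') := he.symm.trans he'
  rw [div_eq_div_iff h1.ne' h1'.ne'] at heq
  nlinarith

lemma tie_g {v : ℝ} (hv : 1/2 < v) {s : ℝ} (hs : 0 < s) :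
    P01 {u : ℝ | gAnd v u = s} = 0 := by
  rw [P01_apply]
  apply measure_mono_null inter_subset_left
  apply Set.Subsingleton.measure_zero
  have key : ∀ w : ℝ, gAnd v w = s → 0 < w ∧ v - (v - 1/2)/w = s := by
    intro w hw
    rw [gAnd] at hw
    split_ifs at hw with h
    · refine ⟨h, ?_⟩
      rcases le_or_gt (v - (v - 1/2)/w) 0 with h2 | h2
      · rw [max_eq_left h2] at hw; linarith
      · rw [max_eq_right h2.le] at hw; exact hw
    · exact absurd hw.symm (ne_of_gt hs)
  intro u hu u' hu'
  obtain ⟨h0, he⟩ := key _ hu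
  obtain ⟨h0', he'⟩ := key _ hu'
  have hkey : (v - 1/2)/u = (v - 1/2)/u' := by linarith
  rw [div_eq_div_iff h0.ne' h0'.ne'] at hkey
  nlinarith

lemma q1_nonneg (T : TieRule) (a b : Bid) : 0 ≤ q1 T a b := by
  rw [q1]; split_ifs
  · exact zero_le_one
  · exact T.t1_nonneg _
  · exact le_rfl

lemma q1_le_one (T : TieRule) (a b : Bid) : q1 T a b ≤ 1 := by
  rw [q1]; split_ifs
  · exact le_rfl
  · exact T.t1_le_one _
  · exact zero_le_one

lemma q2_nonneg (T : TieRule) (a b : Bid) : 0 ≤ q2 T a b := by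
  rw [q2]; split_ifs
  · exact zero_le_one
  · exact T.t2_nonneg _
  · exact le_rfl

lemma q2_le_one (T : TieRule) (a b : Bid) : q2 T a b ≤ 1 := by
  rw [q2]; split_ifs
  · exact le_rfl
  · exact T.t2_le_one _
  · exact zero_le_one

lemma abs_uAnd_le (T : TieRule) (a b : Bid) : |uAnd T a b| ≤ 1 + |a.1| + |a.2| := by
  have h1 := q1_nonneg T a b
  have h2 := q1_le_one T a b
  have h3 := q2_nonneg T a b
  have h4 := q2_le_one T a b
  have h5 := le_abs_self a.1
  have h6 := neg_abs_le a.1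
  have h7 := le_abs_self a.2
  have h8 := neg_abs_le a.2
  rw [uAnd, abs_le]
  constructor <;> nlinarith

lemma abs_uOr_le (v : ℝ) (T : TieRule) (a b : Bid) :
    |uOr v T a b| ≤ |v| + |b.1| + |b.2| := by
  have h1 := q1_nonneg T a b
  have h2 := q1_le_one T a b
  have h3 := q2_nonneg T a b
  have h4 := q2_le_one T a b
  have hP0 : 0 ≤ q1 T a b * q2 T a b := mul_nonneg h1 h3
  have hP1 : q1 T a b * q2 T a b ≤ 1 := by nlinarith
  rw [uOr]
  calc |v * (1 - q1 T a b * q2 T a b) - b.1 * (1 - q1 T a b) - b.2 * (1 - q2 T a b)|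
      ≤ |v * (1 - q1 T a b * q2 T a b) - b.1 * (1 - q1 T a b)| + |b.2 * (1 - q2 T a b)| :=
        abs_sub _ _
    _ ≤ |v * (1 - q1 T a b * q2 T a b)| + |b.1 * (1 - q1 T a b)| + |b.2 * (1 - q2 T a b)| :=
        add_le_add_left (abs_sub _ _) _
    _ ≤ |v| + |b.1| + |b.2| := by
        have k1 : |1 - q1 T a b * q2 T a b| ≤ 1 := abs_le.2 ⟨by linarith, by linarith⟩
        have k2 : |1 - q1 T a b| ≤ 1 := abs_le.2 ⟨by linarith, by linarith⟩
        have k3 : |1 - q2 T a b| ≤ 1 := abs_le.2 ⟨by linarith, by linarith⟩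
        have e1 : |v * (1 - q1 T a b * q2 T a b)| ≤ |v| := by
          rw [abs_mul]; nlinarith [abs_nonneg v, abs_nonneg (1 - q1 T a b * q2 T a b)]
        have e2 : |b.1 * (1 - q1 T a b)| ≤ |b.1| := by
          rw [abs_mul]; nlinarith [abs_nonneg b.1, abs_nonneg (1 - q1 T a b)]
        have e3 : |b.2 * (1 - q2 T a b)| ≤ |b.2| := by
          rw [abs_mul]; nlinarith [abs_nonneg b.2, abs_nonneg (1 - q2 T a b)]
        linarith

lemma integ_P01 {f : ℝ → ℝ} (hf : Measurable f) (C : ℝ) (hC : ∀ x, |f x| ≤ C) :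
    Integrable f P01 :=
  Integrable.mono' (integrable_const C) hf.aestronglyMeasurable
    (ae_of_all _ (by simpa [Real.norm_eq_abs] using hC))

lemma meas_q1_pair (T : TieRule) : Measurable fun p : Bid × Bid => q1 T p.1 p.2 := by
  unfold q1
  exact Measurable.ite (measurableSet_lt measurable_snd.fst measurable_fst.fst)
    measurable_const
    (Measurable.ite (measurableSet_eq_fun measurable_fst.fst measurable_snd.fst)
      (T.meas1.comp measurable_fst.fst) measurable_const)

lemma meas_q2_pair (T : TieRule) : Measurable fun p : Bid × Bid => q2 T p.1 p.2 := by
  unfold q2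
  exact Measurable.ite (measurableSet_lt measurable_snd.snd measurable_fst.snd)
    measurable_const
    (Measurable.ite (measurableSet_eq_fun measurable_fst.snd measurable_snd.snd)
      (T.meas2.comp measurable_fst.snd) measurable_const)

lemma meas_uAnd_pair (T : TieRule) : Measurable fun p : Bid × Bid => uAnd T p.1 p.2 := by
  unfold uAnd
  exact (((meas_q1_pair T).mul (meas_q2_pair T)).sub
    (measurable_fst.fst.mul (meas_q1_pair T))).sub
    (measurable_fst.snd.mul (meas_q2_pair T))

lemma meas_uOr_pair (v : ℝ) (T : TieRule) :
    Measurable fun p : Bid × Bid => uOr v T p.1 p.2 := by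
  unfold uOr
  exact ((measurable_const.mul (measurable_const.sub
      ((meas_q1_pair T).mul (meas_q2_pair T)))).sub
    (measurable_snd.fst.mul (measurable_const.sub (meas_q1_pair T)))).sub
    (measurable_snd.snd.mul (measurable_const.sub (meas_q2_pair T)))

/-- AND's winning probability on an item where OR bids 0. -/
def cA1 (T : TieRule) (a : Bid) : ℝ := if 0 < a.1 then 1 else T.t1 a.1
def cA2 (T : TieRule) (a : Bid) : ℝ := if 0 < a.2 then 1 else T.t2 a.2

lemma cA1_le_one (T : TieRule) (a : Bid) : cA1 T a ≤ 1 := by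
  rw [cA1]; split_ifs; exacts [le_rfl, T.t1_le_one _]

lemma cA2_le_one (T : TieRule) (a : Bid) : cA2 T a ≤ 1 := by
  rw [cA2]; split_ifs; exacts [le_rfl, T.t2_le_one _]

lemma int_and1 (T : TieRule) {a : Bid} (h2 : 0 ≤ a.2) :
    ∫ w, uAnd T a (w/(1+w), 0) ∂P01
      = Fv a.1 * (cA2 T a - a.1) - a.2 * cA2 T a := by
  have hS : MeasurableSet {w : ℝ | w/(1+w) < a.1} :=
    measurableSet_lt meas_xmap measurable_const
  have htie : ∀ᵐ w ∂P01, ¬ (a.1 = w/(1+w)) := by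
    rw [ae_iff]
    simpa using tie_x a.1
  have hcong : (fun w => uAnd T a (w/(1+w), 0)) =ᵐ[P01]
      fun w => ({w : ℝ | w/(1+w) < a.1}.indicator (fun _ => cA2 T a - a.1) w)
        - a.2 * cA2 T a := by
    filter_upwards [htie] with w hw
    have hq2 : q2 T a (w/(1+w), 0) = cA2 T a := by
      rw [q2, cA2]
      by_cases h : (0:ℝ) < a.2
      · simp [h]
      · have h0 : a.2 = 0 := le_antisymm (not_lt.1 h) h2
        simp [h, h0]
    have hq1 : q1 T a (w/(1+w), 0) = if w/(1+w) < a.1 then 1 else 0 := by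
      rw [q1]
      by_cases h : w/(1+w) < a.1
      · simp [h]
      · simp only [h, if_false]
        rw [if_neg hw]
    rw [uAnd, hq1, hq2]
    by_cases h : w/(1+w) < a.1
    · simp only [indicator, mem_setOf_eq, h, if_true]; ring
    · simp only [indicator, mem_setOf_eq, h, if_false]; ring
  rw [integral_congr_ae hcong,
    integral_sub ((integrable_const _).indicator hS) (integrable_const _),
    integral_indicator_const _ hS, integral_const, probReal_univ]
  simp only [smul_eq_mul, ENNReal.toReal_one, one_mul, measureReal_def]
  rw [Fv]

lemma int_and2 (T : TieRule) {a : Bid} (h1 : 0 ≤ a.1) :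
    ∫ w, uAnd T a (0, w/(1+w)) ∂P01
      = Fv a.2 * (cA1 T a - a.2) - a.1 * cA1 T a := by
  have hS : MeasurableSet {w : ℝ | w/(1+w) < a.2} :=
    measurableSet_lt meas_xmap measurable_const
  have htie : ∀ᵐ w ∂P01, ¬ (a.2 = w/(1+w)) := by
    rw [ae_iff]
    simpa using tie_x a.2
  have hcong : (fun w => uAnd T a (0, w/(1+w))) =ᵐ[P01]
      fun w => ({w : ℝ | w/(1+w) < a.2}.indicator (fun _ => cA1 T a - a.2) w)
        - a.1 * cA1 T a := by
    filter_upwards [htie] with w hw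
    have hq1 : q1 T a (0, w/(1+w)) = cA1 T a := by
      rw [q1, cA1]
      by_cases h : (0:ℝ) < a.1
      · simp [h]
      · have h0 : a.1 = 0 := le_antisymm (not_lt.1 h) h1
        simp [h, h0]
    have hq2 : q2 T a (0, w/(1+w)) = if w/(1+w) < a.2 then 1 else 0 := by
      rw [q2]
      by_cases h : w/(1+w) < a.2
      · simp [h]
      · simp only [h, if_false]
        rw [if_neg hw]
    rw [uAnd, hq1, hq2]
    by_cases h : w/(1+w) < a.2
    · simp only [indicator, mem_setOf_eq, h, if_true]; ring
    · simp only [indicator, mem_setOf_eq, h, if_false]; ring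
  rw [integral_congr_ae hcong,
    integral_sub ((integrable_const _).indicator hS) (integrable_const _),
    integral_indicator_const _ hS, integral_const, probReal_univ]
  simp only [smul_eq_mul, ENNReal.toReal_one, one_mul, measureReal_def]
  rw [Fv]

lemma half_ne_top : (1/2 : ℝ≥0∞) ≠ ⊤ := by
  rw [one_div]
  exact ENNReal.inv_ne_top.2 two_ne_zero

lemma half_toReal : (1/2 : ℝ≥0∞).toReal = 1/2 := by
  rw [ENNReal.toReal_div]
  simp

lemma meas_pair1 : Measurable fun u : ℝ => (u/(1+u), (0:ℝ)) :=
  meas_xmap.prodMk measurable_const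

lemma meas_pair2 : Measurable fun u : ℝ => ((0:ℝ), u/(1+u)) :=
  measurable_const.prodMk meas_xmap

lemma int_nuStar (f : Bid → ℝ) (hf : Measurable f) (C : ℝ) (hC : ∀ b, |f b| ≤ C) :
    ∫ b, f b ∂nuStar = (1/2) * (∫ w, f (w/(1+w), 0) ∂P01)
      + (1/2) * (∫ w, f (0, w/(1+w)) ∂P01) := by
  have i1 : Integrable f (Measure.map (fun u : ℝ => (u/(1+u), (0:ℝ))) P01) := by
    rw [integrable_map_measure hf.aestronglyMeasurable meas_pair1.aemeasurable]
    exact integ_P01 (hf.comp meas_pair1) C (fun x => hC _)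
  have i2 : Integrable f (Measure.map (fun u : ℝ => ((0:ℝ), u/(1+u))) P01) := by
    rw [integrable_map_measure hf.aestronglyMeasurable meas_pair2.aemeasurable]
    exact integ_P01 (hf.comp meas_pair2) C (fun x => hC _)
  rw [nuStar, integral_add_measure (i1.smul_measure half_ne_top) (i2.smul_measure half_ne_top),
    integral_smul_measure, integral_smul_measure,
    integral_map meas_pair1.aemeasurable hf.aestronglyMeasurable,
    integral_map meas_pair2.aemeasurable hf.aestronglyMeasurable,
    half_toReal, smul_eq_mul, smul_eq_mul]

lemma meas_uAnd_section (T : TieRule) (a : Bid) : Measurable fun b : Bid => uAnd T a b :=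
  (meas_uAnd_pair T).comp (measurable_const.prodMk measurable_id)

lemma psi_formula (T : TieRule) {a : Bid} (h1 : 0 ≤ a.1) (h2 : 0 ≤ a.2) :
    ∫ b, uAnd T a b ∂nuStar =
      (1/2) * (Fv a.1 * (cA2 T a - a.1) - a.2 * cA2 T a)
      + (1/2) * (Fv a.2 * (cA1 T a - a.2) - a.1 * cA1 T a) := by
  rw [int_nuStar _ (meas_uAnd_section T a) (1 + |a.1| + |a.2|) (fun b => abs_uAnd_le T a b),
    int_and1 T h2, int_and2 T h1]

lemma psi_le (T : TieRule) {a : Bid} (h1 : 0 ≤ a.1) (h2 : 0 ≤ a.2) :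
    ∫ b, uAnd T a b ∂nuStar ≤ 0 := by
  rw [psi_formula T h1 h2]
  have k1 : Fv a.1 * (cA2 T a - a.1) ≤ a.1 := Fv_key h1 (cA2_le_one T a)
  have k2 : Fv a.2 * (cA1 T a - a.2) ≤ a.2 := Fv_key h2 (cA1_le_one T a)
  have e1 : a.1 * cA1 T a = a.1 := by
    rw [cA1]; split_ifs with h
    · ring
    · have h0 : a.1 = 0 := le_antisymm (not_lt.1 h) h1
      rw [h0]; ring
  have e2 : a.2 * cA2 T a = a.2 := by
    rw [cA2]; split_ifs with h
    · ring
    · have h0 : a.2 = 0 := le_antisymm (not_lt.1 h) h2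
      rw [h0]; ring
  linarith

lemma psi_eq (T : TieRule) {y : ℝ} (h0 : 0 ≤ y) (h1 : y ≤ 1/2) :
    ∫ b, uAnd T (y, y) b ∂nuStar = 0 := by
  rw [psi_formula T (a := (y, y)) h0 h0]
  rcases eq_or_lt_of_le h0 with h | h
  · have hF : Fv (0:ℝ) = 0 := by
      rw [Fv_eq le_rfl (by norm_num)]; norm_num
    simp only [← h, hF]
    ring
  · have hc1 : cA1 T (y, y) = 1 := if_pos h
    have hc2 : cA2 T (y, y) = 1 := if_pos h
    have hne : (1:ℝ) - y ≠ 0 := by intro hcon; linarith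
    rw [hc1, hc2, Fv_eq h0 h1]
    field_simp
    ring

lemma meas_gpair (v : ℝ) : Measurable fun u : ℝ => (gAnd v u, gAnd v u) :=
  (meas_gAnd v).prodMk (meas_gAnd v)

set_option maxHeartbeats 1000000 in
lemma meas_uOr_gsec (v : ℝ) (T : TieRule) (b : Bid) :
    Measurable fun u : ℝ => uOr v T (gAnd v u, gAnd v u) b :=
  (meas_uOr_pair v T).comp ((meas_gpair v).prodMk measurable_const)

lemma ae_tie_g {v : ℝ} (hv : 1/2 < v) {s : ℝ} (hs : 0 < s) :
    ∀ᵐ u ∂P01, gAnd v u ≠ s := by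
  rw [ae_iff]
  simpa using tie_g hv hs

lemma int_or_pp {v : ℝ} (hv : 1/2 < v) (T : TieRule) {b : Bid}
    (hb1 : 0 < b.1) (hb2 : 0 < b.2) :
    ∫ u, uOr v T (gAnd v u, gAnd v u) b ∂P01
      = v * Gv v (max b.1 b.2) - b.1 * Gv v b.1 - b.2 * Gv v b.2 := by
  have hSM : MeasurableSet {u : ℝ | gAnd v u ≤ max b.1 b.2} :=
    measurableSet_le (meas_gAnd v) measurable_const
  have hS1 : MeasurableSet {u : ℝ | gAnd v u ≤ b.1} :=
    measurableSet_le (meas_gAnd v) measurable_const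
  have hS2 : MeasurableSet {u : ℝ | gAnd v u ≤ b.2} :=
    measurableSet_le (meas_gAnd v) measurable_const
  have hcong : (fun u => uOr v T (gAnd v u, gAnd v u) b) =ᵐ[P01]
      fun u => ({u : ℝ | gAnd v u ≤ max b.1 b.2}.indicator (fun _ => v) u)
        - ({u : ℝ | gAnd v u ≤ b.1}.indicator (fun _ => b.1) u)
        - ({u : ℝ | gAnd v u ≤ b.2}.indicator (fun _ => b.2) u) := by
    filter_upwards [ae_tie_g hv hb1, ae_tie_g hv hb2] with u hu1 hu2
    have hq1 : q1 T (gAnd v u, gAnd v u) b = (if b.1 < gAnd v u then 1 else 0) := by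
      by_cases h : b.1 < gAnd v u
      · simp [q1, h]
      · simp [q1, h, hu1]
    have hq2 : q2 T (gAnd v u, gAnd v u) b = (if b.2 < gAnd v u then 1 else 0) := by
      by_cases h : b.2 < gAnd v u
      · simp [q2, h]
      · simp [q2, h, hu2]
    rw [uOr, hq1, hq2]
    by_cases h1 : b.1 < gAnd v u <;> by_cases h2 : b.2 < gAnd v u
    · have hM : ¬ gAnd v u ≤ max b.1 b.2 := not_le.2 (max_lt h1 h2)
      have n1 : ¬ gAnd v u ≤ b.1 := not_le.2 h1
      have n2 : ¬ gAnd v u ≤ b.2 := not_le.2 h2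
      simp only [if_pos h1, if_pos h2, indicator, mem_setOf_eq, hM, n1, n2, if_false]
      ring
    · have l2 : gAnd v u ≤ b.2 := not_lt.1 h2
      have hM : gAnd v u ≤ max b.1 b.2 := le_trans l2 (le_max_right _ _)
      have n1 : ¬ gAnd v u ≤ b.1 := not_le.2 h1
      simp only [if_pos h1, if_neg h2, indicator, mem_setOf_eq, hM, n1, l2, if_true, if_false]
      ring
    · have l1 : gAnd v u ≤ b.1 := not_lt.1 h1
      have hM : gAnd v u ≤ max b.1 b.2 := le_trans l1 (le_max_left _ _)
      have n2 : ¬ gAnd v u ≤ b.2 := not_le.2 h2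
      simp only [if_neg h1, if_pos h2, indicator, mem_setOf_eq, hM, n2, l1, if_true, if_false]
      ring
    · have l1 : gAnd v u ≤ b.1 := not_lt.1 h1
      have l2 : gAnd v u ≤ b.2 := not_lt.1 h2
      have hM : gAnd v u ≤ max b.1 b.2 := le_trans l1 (le_max_left _ _)
      simp only [if_neg h1, if_neg h2, indicator, mem_setOf_eq, hM, l1, l2, if_true]
      ring
  have hXM : Integrable (fun u => ({u : ℝ | gAnd v u ≤ max b.1 b.2}.indicator (fun _ => v) u)) P01 :=
    (integrable_const _).indicator hSM
  have hX1 : Integrable (fun u => ({u : ℝ | gAnd v u ≤ b.1}.indicator (fun _ => b.1) u)) P01 :=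
    (integrable_const _).indicator hS1
  have hX2 : Integrable (fun u => ({u : ℝ | gAnd v u ≤ b.2}.indicator (fun _ => b.2) u)) P01 :=
    (integrable_const _).indicator hS2
  have hXM1 : Integrable (fun u => ({u : ℝ | gAnd v u ≤ max b.1 b.2}.indicator (fun _ => v) u)
      - ({u : ℝ | gAnd v u ≤ b.1}.indicator (fun _ => b.1) u)) P01 := hXM.sub hX1
  rw [integral_congr_ae hcong, integral_sub hXM1 hX2, integral_sub hXM hX1,
    integral_indicator_const _ hSM, integral_indicator_const _ hS1,
    integral_indicator_const _ hS2]
  simp only [smul_eq_mul, Gv, measureReal_def]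
  ring

lemma int_or_p0 {v : ℝ} (hv : 1/2 < v) (T : TieRule) {b : Bid}
    (hb1 : 0 < b.1) (hb2 : b.2 = 0) :
    ∫ u, uOr v T (gAnd v u, gAnd v u) b ∂P01 = (v - b.1) * Gv v b.1 := by
  have hS1 : MeasurableSet {u : ℝ | gAnd v u ≤ b.1} :=
    measurableSet_le (meas_gAnd v) measurable_const
  have hcong : (fun u => uOr v T (gAnd v u, gAnd v u) b) =ᵐ[P01]
      fun u => {u : ℝ | gAnd v u ≤ b.1}.indicator (fun _ => v - b.1) u := by
    filter_upwards [ae_tie_g hv hb1] with u hu1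
    have hq1 : q1 T (gAnd v u, gAnd v u) b = (if b.1 < gAnd v u then 1 else 0) := by
      by_cases h : b.1 < gAnd v u
      · simp [q1, h]
      · simp [q1, h, hu1]
    rw [uOr, hq1]
    by_cases h1 : b.1 < gAnd v u
    · have hq2 : q2 T (gAnd v u, gAnd v u) b = 1 := by
        have h2 : b.2 < gAnd v u := by rw [hb2]; exact lt_trans hb1 h1
        simp [q2, h2]
      have n1 : ¬ gAnd v u ≤ b.1 := not_le.2 h1
      simp only [if_pos h1, hq2, hb2, indicator, mem_setOf_eq, n1, if_false]
      ring
    · have l1 : gAnd v u ≤ b.1 := not_lt.1 h1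
      simp only [if_neg h1, hb2, indicator, mem_setOf_eq, l1, if_true]
      ring
  rw [integral_congr_ae hcong, integral_indicator_const _ hS1]
  simp only [smul_eq_mul, Gv, measureReal_def]
  ring

lemma int_or_0p {v : ℝ} (hv : 1/2 < v) (T : TieRule) {b : Bid}
    (hb1 : b.1 = 0) (hb2 : 0 < b.2) :
    ∫ u, uOr v T (gAnd v u, gAnd v u) b ∂P01 = (v - b.2) * Gv v b.2 := by
  have hS2 : MeasurableSet {u : ℝ | gAnd v u ≤ b.2} :=
    measurableSet_le (meas_gAnd v) measurable_const
  have hcong : (fun u => uOr v T (gAnd v u, gAnd v u) b) =ᵐ[P01]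
      fun u => {u : ℝ | gAnd v u ≤ b.2}.indicator (fun _ => v - b.2) u := by
    filter_upwards [ae_tie_g hv hb2] with u hu2
    have hq2 : q2 T (gAnd v u, gAnd v u) b = (if b.2 < gAnd v u then 1 else 0) := by
      by_cases h : b.2 < gAnd v u
      · simp [q2, h]
      · simp [q2, h, hu2]
    rw [uOr, hq2]
    by_cases h2 : b.2 < gAnd v u
    · have hq1 : q1 T (gAnd v u, gAnd v u) b = 1 := by
        have h1 : b.1 < gAnd v u := by rw [hb1]; exact lt_trans hb2 h2
        simp [q1, h1]
      have n2 : ¬ gAnd v u ≤ b.2 := not_le.2 h2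
      simp only [if_pos h2, hq1, hb1, indicator, mem_setOf_eq, n2, if_false]
      ring
    · have l2 : gAnd v u ≤ b.2 := not_lt.1 h2
      simp only [if_neg h2, hb1, indicator, mem_setOf_eq, l2, if_true]
      ring
  rw [integral_congr_ae hcong, integral_indicator_const _ hS2]
  simp only [smul_eq_mul, Gv, measureReal_def]
  ring

lemma int_or_00 {v : ℝ} (hv : 1/2 < v) (T : TieRule) {b : Bid}
    (hb1 : b.1 = 0) (hb2 : b.2 = 0) :
    ∫ u, uOr v T (gAnd v u, gAnd v u) b ∂P01 ≤ v - 1/2 := by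
  have hS : MeasurableSet {u : ℝ | gAnd v u ≤ 0} :=
    measurableSet_le (meas_gAnd v) measurable_const
  have hle : ∀ u, uOr v T (gAnd v u, gAnd v u) b
      ≤ {u : ℝ | gAnd v u ≤ 0}.indicator (fun _ => v) u := by
    intro u
    rw [uOr]
    by_cases h : 0 < gAnd v u
    · have hq1 : q1 T (gAnd v u, gAnd v u) b = 1 := by
        have h1 : b.1 < gAnd v u := by rw [hb1]; exact h
        simp [q1, h1]
      have hq2 : q2 T (gAnd v u, gAnd v u) b = 1 := by
        have h2 : b.2 < gAnd v u := by rw [hb2]; exact h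
        simp [q2, h2]
      have hn : ¬ gAnd v u ≤ 0 := not_le.2 h
      simp only [hq1, hq2, hb1, hb2, indicator, mem_setOf_eq, hn, if_false]
      norm_num
    · have hg : gAnd v u = 0 := le_antisymm (not_lt.1 h) (gAnd_nonneg v u)
      have hq1 : q1 T (gAnd v u, gAnd v u) b = T.t1 (gAnd v u) := by
        have h1 : ¬ b.1 < gAnd v u := by rw [hb1, hg]; exact lt_irrefl 0
        have h1' : gAnd v u = b.1 := by rw [hb1, hg]
        simp [q1, h1, h1']
      have hq2 : q2 T (gAnd v u, gAnd v u) b = T.t2 (gAnd v u) := by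
        have h2 : ¬ b.2 < gAnd v u := by rw [hb2, hg]; exact lt_irrefl 0
        have h2' : gAnd v u = b.2 := by rw [hb2, hg]
        simp [q2, h2, h2']
      have hl : gAnd v u ≤ 0 := le_of_eq hg
      simp only [hq1, hq2, hb1, hb2, indicator, mem_setOf_eq, hl, if_true]
      have ht1 := T.t1_nonneg (gAnd v u)
      have ht2 := T.t2_nonneg (gAnd v u)
      have ht1' := T.t1_le_one (gAnd v u)
      have ht2' := T.t2_le_one (gAnd v u)
      nlinarith [mul_nonneg ht1 ht2]
  have hint1 : Integrable (fun u => uOr v T (gAnd v u, gAnd v u) b) P01 :=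
    integ_P01 (meas_uOr_gsec v T b) (|v| + |b.1| + |b.2|)
      (fun u => abs_uOr_le v T _ b)
  have hint2 : Integrable (fun u => {u : ℝ | gAnd v u ≤ 0}.indicator (fun _ => v) u) P01 :=
    (integrable_const _).indicator hS
  refine le_trans (integral_mono hint1 hint2 hle) ?_
  rw [integral_indicator_const _ hS]
  have hG : Gv v 0 = (v - 1/2) / (v - 0) := Gv_eq hv le_rfl (by norm_num)
  rw [smul_eq_mul]
  rw [show P01.real {u : ℝ | gAnd v u ≤ 0} = Gv v 0 from rfl, hG]
  rw [sub_zero, div_mul_cancel₀]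
  intro h0; rw [h0] at hv; norm_num at hv

lemma phi_le {v : ℝ} (hv : 1/2 < v) (T : TieRule) {b : Bid}
    (h1 : 0 ≤ b.1) (h2 : 0 ≤ b.2) :
    ∫ u, uOr v T (gAnd v u, gAnd v u) b ∂P01 ≤ v - 1/2 := by
  rcases h1.lt_or_eq with hb1 | hb1 <;> rcases h2.lt_or_eq with hb2 | hb2
  · rw [int_or_pp hv T hb1 hb2]
    rcases max_choice b.1 b.2 with hM | hM <;> rw [hM]
    · nlinarith [Gv_key hv (le_of_lt hb1), mul_nonneg (le_of_lt hb2) (Gv_nonneg v b.2)]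
    · nlinarith [Gv_key hv (le_of_lt hb2), mul_nonneg (le_of_lt hb1) (Gv_nonneg v b.1)]
  · rw [int_or_p0 hv T hb1 hb2.symm]
    exact Gv_key hv (le_of_lt hb1)
  · rw [int_or_0p hv T hb1.symm hb2]
    exact Gv_key hv (le_of_lt hb2)
  · exact int_or_00 hv T hb1.symm hb2.symm

lemma phi_eq1 {v : ℝ} (hv : 1/2 < v) (T : TieRule) {x : ℝ} (h0 : 0 < x) (h1 : x ≤ 1/2) :
    ∫ u, uOr v T (gAnd v u, gAnd v u) (x, 0) ∂P01 = v - 1/2 := by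
  rw [int_or_p0 hv T (b := (x, 0)) h0 rfl]
  rw [Gv_eq hv h0.le h1]
  rw [mul_comm, div_mul_cancel₀]
  intro hcon; linarith

lemma phi_eq2 {v : ℝ} (hv : 1/2 < v) (T : TieRule) {x : ℝ} (h0 : 0 < x) (h1 : x ≤ 1/2) :
    ∫ u, uOr v T (gAnd v u, gAnd v u) ((0:ℝ), x) ∂P01 = v - 1/2 := by
  rw [int_or_0p hv T (b := ((0:ℝ), x)) rfl h0]
  rw [Gv_eq hv h0.le h1]
  rw [mul_comm, div_mul_cancel₀]
  intro hcon; linarith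

instance muStar_prob (v : ℝ) : IsProbabilityMeasure (muStar v) :=
  Measure.isProbabilityMeasure_map (meas_gpair v).aemeasurable

lemma ennreal_half_add_half : (1/2 : ℝ≥0∞) + 1/2 = 1 := by
  rw [one_div, ENNReal.inv_two_add_inv_two]

instance nuStar_prob : IsProbabilityMeasure nuStar := by
  constructor
  rw [nuStar, Measure.add_apply, Measure.smul_apply, Measure.smul_apply,
    Measure.map_apply meas_pair1 MeasurableSet.univ,
    Measure.map_apply meas_pair2 MeasurableSet.univ]
  simp only [preimage_univ, measure_univ, smul_eq_mul, mul_one]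
  exact ennreal_half_add_half

lemma one_le_Hval (v : ℝ) : 1 ≤ Hval v := le_max_left _ _

lemma muStar_box {v : ℝ} (hv : 1/2 < v) : muStar v (box v) = 1 := by
  rw [muStar, Measure.map_apply (meas_gpair v) (meas_box v), P01_apply]
  have hsub : Icc (0:ℝ) 1 ⊆ (fun u => (gAnd v u, gAnd v u)) ⁻¹' box v := by
    intro u hu
    have h1 := gAnd_nonneg v u
    have h2 : gAnd v u ≤ Hval v := by
      have := gAnd_le_half hv hu.2
      have := one_le_Hval v
      linarith
    simp only [mem_preimage, box, mem_prod, mem_Icc]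
    exact ⟨⟨h1, h2⟩, ⟨h1, h2⟩⟩
  rw [inter_eq_self_of_subset_right hsub, Real.volume_Icc]
  norm_num

lemma xmap_mem {u : ℝ} (hu : u ∈ Icc (0:ℝ) 1) (v : ℝ) : u/(1+u) ∈ Icc (0:ℝ) (Hval v) := by
  have h1 : (0:ℝ) < 1 + u := by linarith [hu.1]
  constructor
  · exact div_nonneg hu.1 h1.le
  · have : u/(1+u) ≤ 1 := by rw [div_le_one h1]; linarith [hu.2]
    linarith [one_le_Hval v]

lemma zero_mem_H (v : ℝ) : (0:ℝ) ∈ Icc (0:ℝ) (Hval v) :=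
  ⟨le_rfl, le_trans zero_le_one (one_le_Hval v)⟩

lemma nuStar_box (v : ℝ) : nuStar (box v) = 1 := by
  rw [nuStar, Measure.add_apply, Measure.smul_apply, Measure.smul_apply,
    Measure.map_apply meas_pair1 (meas_box v),
    Measure.map_apply meas_pair2 (meas_box v), P01_apply, P01_apply]
  have e1 : (fun u : ℝ => (u/(1+u), (0:ℝ))) ⁻¹' box v ∩ Icc 0 1 = Icc 0 1 := by
    apply inter_eq_self_of_subset_right
    intro u hu
    simp only [mem_preimage, box, mem_prod]
    exact ⟨xmap_mem hu v, zero_mem_H v⟩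
  have e2 : (fun u : ℝ => ((0:ℝ), u/(1+u))) ⁻¹' box v ∩ Icc 0 1 = Icc 0 1 := by
    apply inter_eq_self_of_subset_right
    intro u hu
    simp only [mem_preimage, box, mem_prod]
    exact ⟨zero_mem_H v, xmap_mem hu v⟩
  rw [e1, e2, Real.volume_Icc]
  norm_num
  exact ENNReal.inv_two_add_inv_two

lemma ae_box_prod {v : ℝ} (hv : 1/2 < v) :
    ∀ᵐ p ∂((muStar v).prod nuStar), p ∈ box v ×ˢ box v := by
  rw [ae_iff]
  have hset : {p : Bid × Bid | ¬ p ∈ box v ×ˢ box v} = (box v ×ˢ box v)ᶜ := rfl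
  rw [hset, measure_compl ((meas_box v).prod (meas_box v)) (measure_ne_top _ _),
    Measure.prod_prod, muStar_box hv, nuStar_box v, measure_univ]
  simp

lemma integ_prod_uAnd {v : ℝ} (hv : 1/2 < v) (T : TieRule) :
    Integrable (fun p : Bid × Bid => uAnd T p.1 p.2) ((muStar v).prod nuStar) := by
  refine (integrable_const (1 + 2 * Hval v)).mono'
    (meas_uAnd_pair T).aestronglyMeasurable ?_
  filter_upwards [ae_box_prod hv] with p hp
  simp only [mem_prod, box, mem_Icc] at hp
  obtain ⟨⟨⟨h1, h2⟩, ⟨h3, h4⟩⟩, -⟩ := hp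
  rw [Real.norm_eq_abs]
  refine (abs_uAnd_le T p.1 p.2).trans ?_
  rw [abs_of_nonneg h1, abs_of_nonneg h3]
  linarith

lemma integ_prod_uOr {v : ℝ} (hv : 1/2 < v) (T : TieRule) :
    Integrable (fun p : Bid × Bid => uOr v T p.1 p.2) ((muStar v).prod nuStar) := by
  refine (integrable_const (|v| + 2 * Hval v)).mono'
    (meas_uOr_pair v T).aestronglyMeasurable ?_
  filter_upwards [ae_box_prod hv] with p hp
  simp only [mem_prod, box, mem_Icc] at hp
  obtain ⟨-, ⟨⟨h1, h2⟩, ⟨h3, h4⟩⟩⟩ := hp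
  rw [Real.norm_eq_abs]
  refine (abs_uOr_le v T p.1 p.2).trans ?_
  rw [abs_of_nonneg h1, abs_of_nonneg h3]
  linarith

set_option maxHeartbeats 2000000 in
lemma UAnd_eq {v : ℝ} (hv : 1/2 < v) (T : TieRule) : UAnd T (muStar v) nuStar = 0 := by
  have hpsi : StronglyMeasurable fun a : Bid => ∫ b, uAnd T a b ∂nuStar :=
    StronglyMeasurable.integral_prod_right' (ν := nuStar)
      (f := fun p : Bid × Bid => uAnd T p.1 p.2) (meas_uAnd_pair T).stronglyMeasurable
  have h' : (fun u => ∫ b, uAnd T (gAnd v u, gAnd v u) b ∂nuStar) =ᵐ[P01]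
      fun _ => (0:ℝ) := by
    filter_upwards [ae_mem01] with u hu
    exact psi_eq T (gAnd_nonneg v u) (gAnd_le_half hv hu.2)
  rw [UAnd, integral_prod _ (integ_prod_uAnd hv T), muStar,
    integral_map (meas_gpair v).aemeasurable hpsi.aestronglyMeasurable,
    integral_congr_ae h', integral_zero]

lemma meas_q1_left (T : TieRule) (b : Bid) : Measurable fun a : Bid => q1 T a b := by
  unfold q1
  exact Measurable.ite (measurableSet_lt measurable_const measurable_fst)
    measurable_const
    (Measurable.ite (measurableSet_eq_fun measurable_fst measurable_const)
      (T.meas1.comp measurable_fst) measurable_const)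

lemma meas_q2_left (T : TieRule) (b : Bid) : Measurable fun a : Bid => q2 T a b := by
  unfold q2
  exact Measurable.ite (measurableSet_lt measurable_const measurable_snd)
    measurable_const
    (Measurable.ite (measurableSet_eq_fun measurable_snd measurable_const)
      (T.meas2.comp measurable_snd) measurable_const)

lemma meas_uOr_left (v : ℝ) (T : TieRule) (b : Bid) :
    Measurable fun a : Bid => uOr v T a b := by
  unfold uOr
  exact ((measurable_const.mul (measurable_const.sub
      ((meas_q1_left T b).mul (meas_q2_left T b)))).sub
    (measurable_const.mul (measurable_const.sub (meas_q1_left T b)))).sub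
    (measurable_const.mul (measurable_const.sub (meas_q2_left T b)))

set_option maxHeartbeats 2000000 in
lemma UOr_eq {v : ℝ} (hv : 1/2 < v) (T : TieRule) :
    UOr v T (muStar v) nuStar = v - 1/2 := by
  have hphi : StronglyMeasurable fun b : Bid => ∫ a, uOr v T a b ∂(muStar v) :=
    StronglyMeasurable.integral_prod_left' (μ := muStar v)
      (f := fun p : Bid × Bid => uOr v T p.1 p.2) (meas_uOr_pair v T).stronglyMeasurable
  have hne0 : ∀ᵐ w ∂P01, w ≠ 0 := by
    rw [ae_iff]
    have hs : {w : ℝ | ¬ w ≠ 0} = {(0:ℝ)} := by ext w; simp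
    rw [hs, P01_apply]
    exact measure_mono_null inter_subset_left (measure_singleton 0)
  have hc1 : (fun w => ∫ a, uOr v T a (w/(1+w), 0) ∂(muStar v)) =ᵐ[P01]
      fun _ => v - 1/2 := by
    filter_upwards [ae_mem01, hne0] with w hw hw0
    have hwpos : 0 < w := lt_of_le_of_ne hw.1 (Ne.symm hw0)
    have hden : (0:ℝ) < 1 + w := by linarith [hw.1]
    have hx0 : 0 < w/(1+w) := div_pos hwpos hden
    have hx1 : w/(1+w) ≤ 1/2 := by
      rw [div_le_iff₀ hden]; linarith [hw.2]
    have hm : Measurable fun a : Bid => uOr v T a (w/(1+w), 0) :=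
      meas_uOr_left v T _
    rw [muStar, integral_map (meas_gpair v).aemeasurable hm.aestronglyMeasurable]
    exact phi_eq1 hv T hx0 hx1
  have hc2 : (fun w => ∫ a, uOr v T a ((0:ℝ), w/(1+w)) ∂(muStar v)) =ᵐ[P01]
      fun _ => v - 1/2 := by
    filter_upwards [ae_mem01, hne0] with w hw hw0
    have hwpos : 0 < w := lt_of_le_of_ne hw.1 (Ne.symm hw0)
    have hden : (0:ℝ) < 1 + w := by linarith [hw.1]
    have hx0 : 0 < w/(1+w) := div_pos hwpos hden
    have hx1 : w/(1+w) ≤ 1/2 := by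
      rw [div_le_iff₀ hden]; linarith [hw.2]
    have hm : Measurable fun a : Bid => uOr v T a ((0:ℝ), w/(1+w)) :=
      meas_uOr_left v T _
    rw [muStar, integral_map (meas_gpair v).aemeasurable hm.aestronglyMeasurable]
    exact phi_eq2 hv T hx0 hx1
  have i1 : Integrable (fun b => ∫ a, uOr v T a b ∂(muStar v))
      (Measure.map (fun u : ℝ => (u/(1+u), (0:ℝ))) P01) := by
    rw [integrable_map_measure hphi.aestronglyMeasurable meas_pair1.aemeasurable]
    exact (integrable_const (v - 1/2)).congr hc1.symm
  have i2 : Integrable (fun b => ∫ a, uOr v T a b ∂(muStar v))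
      (Measure.map (fun u : ℝ => ((0:ℝ), u/(1+u))) P01) := by
    rw [integrable_map_measure hphi.aestronglyMeasurable meas_pair2.aemeasurable]
    exact (integrable_const (v - 1/2)).congr hc2.symm
  rw [UOr, integral_prod_symm _ (integ_prod_uOr hv T), nuStar,
    integral_add_measure (i1.smul_measure half_ne_top) (i2.smul_measure half_ne_top),
    integral_smul_measure, integral_smul_measure,
    integral_map meas_pair1.aemeasurable hphi.aestronglyMeasurable,
    integral_map meas_pair2.aemeasurable hphi.aestronglyMeasurable,
    integral_congr_ae hc1, integral_congr_ae hc2, integral_const, half_toReal,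
    probReal_univ]
  simp only [ENNReal.toReal_one, one_smul, smul_eq_mul]
  ring

end Aux

/-- For every `v > 1/2` and every tie-breaking rule, `(μ*, ν*)` is a mixed
Nash equilibrium, with `U_and(μ*,ν*) = 0` and `U_or(μ*,ν*) = v - 1/2`. -/
theorem star_is_nash (v : ℝ) (hv : 1/2 < v) (T : TieRule) :
    IsNash v T (muStar v) nuStar ∧
    UAnd T (muStar v) nuStar = 0 ∧
    UOr v T (muStar v) nuStar = v - 1/2 := by
  have hA : UAnd T (muStar v) nuStar = 0 := UAnd_eq hv T
  have hO : UOr v T (muStar v) nuStar = v - 1/2 := UOr_eq hv T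
  refine ⟨⟨⟨inferInstance, muStar_box hv⟩, ⟨inferInstance, nuStar_box v⟩, ?_, ?_⟩, hA, hO⟩
  · intro a ha
    rw [hA]
    simp only [box, mem_prod, mem_Icc] at ha
    exact psi_le T ha.1.1 ha.2.1
  · intro b hb
    rw [hO, muStar, integral_map (meas_gpair v).aemeasurable
      (meas_uOr_left v T b).aestronglyMeasurable]
    simp only [box, mem_prod, mem_Icc] at hb
    exact phi_le hv T hb.1.1 hb.2.1
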